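/- For every positive integer x and u ∈ (0,1), |E(η_x) − x/(1+u)| ≤ 2u/(1+u)² ≤ 1/2. -/

import Mathlib

open MeasureTheory ProbabilityTheory

lemma aux_pow_bound (u : ℝ) (hu0 : 0 < u) (hu1 : u < 1) :
    ∀ x : ℕ, u ^ x * (1 + x * (1 - u)) ≤ 1 := by
  intro x
  induction x with
  | zero => simp
  | succ n ih =>
    have hn : (0:ℝ) ≤ n := Nat.cast_nonneg n
    have h1 : u * (1 + ((n : ℝ) + 1) * (1 - u)) ≤ 1 + n * (1 - u) := by
      nlinarith [sq_nonneg (1-u), mul_nonneg hn (sq_nonneg (1-u))]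
    have h2 : (0:ℝ) ≤ u ^ n := by positivity
    calc u ^ (n+1) * (1 + ((n:ℕ)+1 : ℕ) * (1 - u))
        = u ^ n * (u * (1 + ((n:ℝ)+1) * (1 - u))) := by push_cast; ring
      _ ≤ u ^ n * (1 + n * (1 - u)) := by nlinarith
      _ ≤ 1 := ih

lemma aux_final_bound (u : ℝ) (hu0 : 0 < u) (hu1 : u < 1) (x : ℕ) (hx : 1 ≤ x)
    (S T : ℝ)
    (hT : T = (1 - (-u) ^ (x+1)) / (1 + u))
    (hS : S = (((x:ℝ)+1) * (1 + (-u) ^ (x+2)) * (1+u) - (1+u^2) * (1 - (-u)^(x+1))) / (1+u)^3) :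
    |S / T - (x:ℝ) / (1 + u)| ≤ 2 * u / (1 + u) ^ 2 := by
  set w : ℝ := (-u) ^ (x+1) with hw
  have hxR : (1:ℝ) ≤ x := by exact_mod_cast hx
  have hn : (0:ℝ) ≤ x := Nat.cast_nonneg x
  have hwabs : |w| = u ^ (x+1) := by
    rw [hw, abs_pow, abs_neg, abs_of_pos hu0]
  have hwlt : |w| < 1 := by rw [hwabs]; exact pow_lt_one₀ (le_of_lt hu0) hu1 (by omega)
  have hw1 : w < 1 := lt_of_le_of_lt (le_abs_self w) hwlt
  have hw1' : (0:ℝ) < 1 - w := by linarith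
  have hup : (0:ℝ) < 1 + u := by linarith
  have hv2 : (-u) ^ (x+2) = -u * w := by rw [hw, pow_succ]; ring
  have hA : S / T - (x:ℝ) / (1+u)
      = (u*(1-u) + w*(((x:ℝ)+1) - u - x*u^2)) / ((1+u)^2 * (1-w)) := by
    rw [hS, hT, hv2]
    field_simp
    ring
  rw [hA, abs_div]
  have hden : |(1+u)^2 * (1-w)| = (1+u)^2 * (1-w) := abs_of_pos (by positivity)
  rw [hden, div_le_div_iff₀ (by positivity) (by positivity)]
  have hc : (0:ℝ) ≤ ((x:ℝ)+1) - u - x*u^2 := by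
    nlinarith [mul_nonneg hn (by nlinarith : (0:ℝ) ≤ 1 - u^2)]
  have habs : |u*(1-u) + w*(((x:ℝ)+1) - u - x*u^2)|
      ≤ u*(1-u) + |w| * (((x:ℝ)+1) - u - x*u^2) := by
    calc |u*(1-u) + w*(((x:ℝ)+1) - u - x*u^2)|
        ≤ |u*(1-u)| + |w*(((x:ℝ)+1) - u - x*u^2)| := abs_add_le _ _
      _ = u*(1-u) + |w| * (((x:ℝ)+1) - u - x*u^2) := by
          rw [abs_mul, abs_mul, abs_of_pos hu0,
            abs_of_nonneg (by linarith : (0:ℝ) ≤ 1-u), abs_of_nonneg hc]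
  have hkey : u ^ x * (1 + x * (1 - u)) ≤ 1 := aux_pow_bound u hu0 hu1 x
  have hfin : u*(1-u) + |w| * (((x:ℝ)+1) - u - x*u^2) ≤ 2*u*(1-w) := by
    have h1 : u*(1-u) + |w| * (((x:ℝ)+1) - u - x*u^2) + 2*u*|w| ≤ 2*u := by
      rw [hwabs]
      have hps : u^(x+1) = u^x * u := pow_succ u x
      nlinarith [pow_nonneg (le_of_lt hu0) x]
    have h2 : 2*u*(1 - |w|) ≤ 2*u*(1-w) := by nlinarith [le_abs_self w]
    nlinarith
  calc |u*(1-u) + w*(((x:ℝ)+1) - u - x*u^2)| * (1+u)^2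
      ≤ (u*(1-u) + |w| * (((x:ℝ)+1) - u - x*u^2)) * (1+u)^2 :=
        mul_le_mul_of_nonneg_right habs (by positivity)
    _ ≤ (2*u*(1-w)) * (1+u)^2 := mul_le_mul_of_nonneg_right hfin (by positivity)
    _ = 2*u*((1+u)^2*(1-w)) := by ring

lemma aux_TS (u : ℝ) (hu0 : 0 < u) (T S : ℕ → ℝ)
    (hT0 : T 0 = 1) (hT1 : T 1 = 1 - u)
    (hS0 : S 0 = 0) (hS1 : S 1 = 1 - u)
    (hTrec : ∀ n, T (n+2) = (1-u) * T (n+1) + u * T n)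
    (hSrec : ∀ n, S (n+2) = (1-u) * S (n+1) + u * S n + T (n+2)) :
    ∀ n, T n = (1 - (-u)^(n+1))/(1+u) ∧
      S n = (((n:ℝ)+1) * (1 + (-u)^(n+2)) * (1+u) - (1+u^2) * (1 - (-u)^(n+1))) / (1+u)^3 := by
  have hup : (1:ℝ) + u ≠ 0 := by positivity
  have main : ∀ n, (T n = (1 - (-u)^(n+1))/(1+u) ∧
      S n = (((n:ℝ)+1) * (1 + (-u)^(n+2)) * (1+u) - (1+u^2) * (1 - (-u)^(n+1))) / (1+u)^3) ∧
      (T (n+1) = (1 - (-u)^(n+2))/(1+u) ∧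
      S (n+1) = (((n:ℝ)+2) * (1 + (-u)^(n+3)) * (1+u) - (1+u^2) * (1 - (-u)^(n+2))) / (1+u)^3) := by
    intro n
    induction n with
    | zero =>
      refine ⟨⟨?_, ?_⟩, ?_, ?_⟩
      · rw [hT0]; field_simp; ring
      · rw [hS0]; field_simp; ring
      · rw [hT1]; field_simp; ring
      · rw [hS1]; field_simp; ring
    | succ m ih =>
      obtain ⟨⟨hTm, hSm⟩, hTm1, hSm1⟩ := ih
      refine ⟨⟨by push_cast at hTm1 ⊢; rw [hTm1], by push_cast at hSm1 ⊢; rw [hSm1]; ring⟩, ?_, ?_⟩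
      · rw [hTrec m, hTm1, hTm]; push_cast; field_simp; ring
      · rw [hSrec m, hSm1, hSm, hTrec m, hTm1, hTm]; push_cast; field_simp; ring
  exact fun n => (main n).1

theorem conditional_hitting_time_expectation_bounds
    (Ω : Type*) [MeasurableSpace Ω] (P : Measure Ω) [IsProbabilityMeasure P]
    (u : ℝ) (hu : u ∈ Set.Ioo (0 : ℝ) 1)
    (ε : ℕ → Ω → ℕ) (hmeas : ∀ k, Measurable (ε k))
    (hindep : iIndepFun ε P)
    (h1 : ∀ k, P {ω | ε k ω = 1} = ENNReal.ofReal (1 - u))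
    (h2 : ∀ k, P {ω | ε k ω = 2} = ENNReal.ofReal u)
    (σ : ℕ → Ω → ℕ) (hσ : ∀ y ω, σ y ω = ∑ k ∈ Finset.range y, ε k ω)
    (x : ℕ) (hx : 1 ≤ x) :
    |(∑' y : ℕ, (y : ℝ) *
        ((P {ω | σ y ω = x}).toReal / (P {ω | ∃ z, 1 ≤ z ∧ σ z ω = x}).toReal))
      - (x : ℝ) / (1 + u)| ≤ 2 * u / (1 + u) ^ 2 ∧ 2 * u / (1 + u) ^ 2 ≤ 1 / 2 := by
  obtain ⟨hu0, hu1⟩ := hu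
  have hσmeas : ∀ y, Measurable (σ y) := by
    intro y
    have h : σ y = fun ω => ∑ k ∈ Finset.range y, ε k ω := funext fun ω => hσ y ω
    rw [h]
    exact Finset.measurable_sum _ (fun k _ => hmeas k)
  have hAmeas : ∀ y n, MeasurableSet {ω | σ y ω = n} := fun y n =>
    hσmeas y (measurableSet_singleton n)
  have hfinm : ∀ s : Set Ω, P s ≠ ⊤ := fun s => measure_ne_top P s
  -- the good event G
  set G : Set Ω := {ω | ∀ k, ε k ω = 1 ∨ ε k ω = 2} with hGdef
  have hGmeas : MeasurableSet G := by
    have h : G = ⋂ k, ((ε k ⁻¹' {1}) ∪ (ε k ⁻¹' {2})) := by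
      ext ω; simp [hGdef, Set.mem_iInter]
    rw [h]
    exact MeasurableSet.iInter fun k =>
      ((hmeas k (measurableSet_singleton 1)).union (hmeas k (measurableSet_singleton 2)))
  have hEfull : ∀ k, P ((ε k ⁻¹' {1}) ∪ (ε k ⁻¹' {2})) = 1 := by
    intro k
    have hdisj : Disjoint ((ε k) ⁻¹' ({1} : Set ℕ)) ((ε k) ⁻¹' {2}) := by
      refine Set.disjoint_left.mpr ?_
      intro ω ha hb
      simp only [Set.mem_preimage, Set.mem_singleton_iff] at ha hb
      omega
    rw [measure_union hdisj (hmeas k (measurableSet_singleton 2))]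
    have e1 : (ε k) ⁻¹' ({1} : Set ℕ) = {ω | ε k ω = 1} := rfl
    have e2 : (ε k) ⁻¹' ({2} : Set ℕ) = {ω | ε k ω = 2} := rfl
    rw [e1, e2, h1 k, h2 k, ← ENNReal.ofReal_add (by linarith) (by linarith)]
    norm_num
  have hGc : P Gᶜ = 0 := by
    have hsub : Gᶜ ⊆ ⋃ k, ((ε k ⁻¹' {1}) ∪ (ε k ⁻¹' {2}))ᶜ := by
      intro ω hω
      simp only [hGdef, Set.mem_compl_iff, Set.mem_setOf_eq, not_forall] at hω
      obtain ⟨k, hk⟩ := hω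
      push_neg at hk
      refine Set.mem_iUnion.mpr ⟨k, ?_⟩
      simp only [Set.mem_compl_iff, Set.mem_union, Set.mem_preimage, Set.mem_singleton_iff]
      tauto
    refine measure_mono_null hsub (measure_iUnion_null fun k => ?_)
    rw [measure_compl ((hmeas k (measurableSet_singleton 1)).union
      (hmeas k (measurableSet_singleton 2))) (hfinm _), hEfull k]
    simp
  have hkey : ∀ A : Set Ω, P (A ∩ G) = P A := by
    intro A
    have h := measure_inter_add_diff (μ := P) A hGmeas
    have h0 : P (A \ G) = 0 := measure_mono_null (fun ω hω => hω.2) hGc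
    rw [h0, add_zero] at h; exact h
  have hεge : ∀ ω, ω ∈ G → ∀ k, 1 ≤ ε k ω := by
    intro ω hω k; rcases hω k with h | h <;> omega
  have hσge : ∀ y ω, ω ∈ G → y ≤ σ y ω := by
    intro y ω hω
    rw [hσ]
    calc y = ∑ _k ∈ Finset.range y, 1 := by simp
      _ ≤ ∑ k ∈ Finset.range y, ε k ω := Finset.sum_le_sum fun k _ => hεge ω hω k
  have hqzero : ∀ y n, n < y → P {ω | σ y ω = n} = 0 := by
    intro y n hny
    rw [← hkey]
    have h : {ω | σ y ω = n} ∩ G = ∅ := by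
      ext ω
      simp only [Set.mem_inter_iff, Set.mem_setOf_eq, Set.mem_empty_iff_false, iff_false, not_and]
      intro hσn hG
      have := hσge y ω hG
      omega
    rw [h, measure_empty]
  -- independence product formula
  have hprod : ∀ y (n c : ℕ), P ({ω | σ y ω = n} ∩ {ω | ε y ω = c})
      = P {ω | σ y ω = n} * P {ω | ε y ω = c} := by
    intro y n c
    have hi : IndepFun (∑ k ∈ Finset.range y, ε k) (ε y) P :=
      hindep.indepFun_finset_sum_of_notMem hmeas Finset.notMem_range_self
    have h := hi.measure_inter_preimage_eq_mul (s := {n}) (t := {c})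
      (measurableSet_singleton n) (measurableSet_singleton c)
    have hs : (∑ k ∈ Finset.range y, ε k) ⁻¹' {n} = {ω | σ y ω = n} := by
      ext ω
      simp [hσ, Finset.sum_apply]
    have ht : (ε y) ⁻¹' {c} = {ω | ε y ω = c} := rfl
    rwa [hs, ht] at h
  set q : ℕ → ℕ → ℝ := fun y n => (P {ω | σ y ω = n}).toReal with hqdef
  have hstep : ∀ y ω, σ (y+1) ω = σ y ω + ε y ω := by
    intro y ω; rw [hσ, Finset.sum_range_succ, ← hσ]
  have hrec : ∀ y n, q (y+1) (n+2) = (1-u) * q y (n+1) + u * q y n := by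
    intro y n
    have hA : P {ω | σ (y+1) ω = n+2}
        = P ({ω | σ y ω = n+1} ∩ {ω | ε y ω = 1})
          + P ({ω | σ y ω = n} ∩ {ω | ε y ω = 2}) := by
      set A := {ω | σ (y+1) ω = n+2} with hAdef
      set E := (ε y ⁻¹' {1}) ∪ (ε y ⁻¹' {2}) with hEdef
      have hEmeas : MeasurableSet E := (hmeas y (measurableSet_singleton 1)).union
        (hmeas y (measurableSet_singleton 2))
      have h0 : P (A \ E) = 0 := by
        refine measure_mono_null (Set.diff_subset_compl A E) ?_
        rw [measure_compl hEmeas (hfinm _), hEfull y]; simp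
      have h := measure_inter_add_diff (μ := P) A hEmeas
      rw [h0, add_zero] at h
      have hsplit : A ∩ E = ({ω | σ y ω = n+1} ∩ {ω | ε y ω = 1})
          ∪ ({ω | σ y ω = n} ∩ {ω | ε y ω = 2}) := by
        ext ω
        simp only [hAdef, hEdef, Set.mem_inter_iff, Set.mem_union, Set.mem_setOf_eq,
          Set.mem_preimage, Set.mem_singleton_iff, hstep y ω]
        omega
      have hdisj2 : Disjoint ({ω | σ y ω = n+1} ∩ {ω | ε y ω = 1})
          ({ω | σ y ω = n} ∩ {ω | ε y ω = 2}) := by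
        refine Set.disjoint_left.mpr ?_
        intro ω ha hb
        have h1' := ha.2
        have h2' := hb.2
        simp only [Set.mem_setOf_eq] at h1' h2'
        omega
      rw [← h, hsplit, measure_union hdisj2 ((hAmeas y n).inter
        (hmeas y (measurableSet_singleton 2)))]
    have hA' := hA
    rw [hprod y (n+1) 1, hprod y n 2, h1 y, h2 y] at hA'
    simp only [hqdef]
    rw [hA', ENNReal.toReal_add (ENNReal.mul_ne_top (hfinm _) ENNReal.ofReal_ne_top)
      (ENNReal.mul_ne_top (hfinm _) ENNReal.ofReal_ne_top),
      ENNReal.toReal_mul, ENNReal.toReal_mul,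
      ENNReal.toReal_ofReal (by linarith : (0:ℝ) ≤ 1-u),
      ENNReal.toReal_ofReal (by linarith : (0:ℝ) ≤ u)]
    ring
  have hq00 : q 0 0 = 1 := by
    have h : {ω | σ 0 ω = 0} = Set.univ := by ext ω; simp [hσ]
    simp [hqdef, h]
  have hq0n : ∀ n, 1 ≤ n → q 0 n = 0 := by
    intro n hn
    have h : {ω | σ 0 ω = n} = ∅ := by ext ω; simp [hσ]; omega
    simp [hqdef, h]
  have hq11 : q 1 1 = 1 - u := by
    have h : {ω | σ 1 ω = 1} = {ω | ε 0 ω = 1} := by ext ω; simp [hσ]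
    simp only [hqdef, h, h1 0]
    rw [ENNReal.toReal_ofReal (by linarith : (0:ℝ) ≤ 1-u)]
  have hqz' : ∀ y n, n < y → q y n = 0 := by
    intro y n h
    simp [hqdef, hqzero y n h]
  set Tn : ℕ → ℝ := fun n => ∑ y ∈ Finset.range (n+1), q y n with hTdef
  set Sn : ℕ → ℝ := fun n => ∑ y ∈ Finset.range (n+1), (y:ℝ) * q y n with hSdef
  have hT0 : Tn 0 = 1 := by simp [hTdef, hq00]
  have hT1 : Tn 1 = 1 - u := by
    simp [hTdef, Finset.sum_range_succ, hq11, hq0n 1 le_rfl]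
  have hS0 : Sn 0 = 0 := by simp [hSdef]
  have hS1 : Sn 1 = 1 - u := by
    simp [hSdef, Finset.sum_range_succ, hq11]
  have hTrec : ∀ n, Tn (n+2) = (1-u) * Tn (n+1) + u * Tn n := by
    intro n
    have h0 : q 0 (n+2) = 0 := hq0n (n+2) (by omega)
    have hTn' : ∑ y ∈ Finset.range (n+2), q y n = Tn n := by
      rw [Finset.sum_range_succ, hqz' (n+1) n (by omega), add_zero]
    calc Tn (n+2) = ∑ y ∈ Finset.range (n+2), q (y+1) (n+2) + q 0 (n+2) :=
          Finset.sum_range_succ' _ _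
      _ = ∑ y ∈ Finset.range (n+2), ((1-u) * q y (n+1) + u * q y n) := by
          rw [h0, add_zero]; exact Finset.sum_congr rfl fun y _ => hrec y n
      _ = (1-u) * Tn (n+1) + u * Tn n := by
          rw [Finset.sum_add_distrib, ← Finset.mul_sum, ← Finset.mul_sum, hTn']
  have hSrec : ∀ n, Sn (n+2) = (1-u) * Sn (n+1) + u * Sn n + Tn (n+2) := by
    intro n
    have h0 : q 0 (n+2) = 0 := hq0n (n+2) (by omega)
    have hTn' : ∑ y ∈ Finset.range (n+2), q y n = Tn n := by
      rw [Finset.sum_range_succ, hqz' (n+1) n (by omega), add_zero]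
    have hSn' : ∑ y ∈ Finset.range (n+2), (y:ℝ) * q y n = Sn n := by
      rw [Finset.sum_range_succ, hqz' (n+1) n (by omega), mul_zero, add_zero]
    have e1 : Sn (n+2) = ∑ y ∈ Finset.range (n+2), ((y:ℝ)+1) * q (y+1) (n+2) := by
      have := Finset.sum_range_succ' (fun y => (y:ℝ) * q y (n+2)) (n+2)
      simp only [hSdef]
      rw [this, h0, mul_zero, add_zero]
      push_cast
      rfl
    rw [e1]
    calc ∑ y ∈ Finset.range (n+2), ((y:ℝ)+1) * q (y+1) (n+2)
        = ∑ y ∈ Finset.range (n+2), (((y:ℝ)+1) * ((1-u) * q y (n+1) + u * q y n)) :=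
          Finset.sum_congr rfl fun y _ => by rw [hrec y n]
      _ = ∑ y ∈ Finset.range (n+2), ((1-u) * ((y:ℝ) * q y (n+1)) + ((1-u) * q y (n+1)
            + (u * ((y:ℝ) * q y n) + u * q y n))) :=
          Finset.sum_congr rfl fun y _ => by ring
      _ = (1-u) * Sn (n+1) + ((1-u) * Tn (n+1) + (u * Sn n + u * Tn n)) := by
          rw [Finset.sum_add_distrib, Finset.sum_add_distrib, Finset.sum_add_distrib,
            ← Finset.mul_sum, ← Finset.mul_sum, ← Finset.mul_sum, ← Finset.mul_sum,
            hSn', hTn']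
      _ = (1-u) * Sn (n+1) + u * Sn n + Tn (n+2) := by rw [hTrec n]; ring
  -- hitting probability
  have hH : P {ω | ∃ z, 1 ≤ z ∧ σ z ω = x} = ∑ z ∈ Finset.Icc 1 x, P {ω | σ z ω = x} := by
    set H := {ω | ∃ z, 1 ≤ z ∧ σ z ω = x} with hHdef
    have hmono : ∀ z z' ω, z < z' → ω ∈ G → σ z ω = x → σ z' ω = x → False := by
      intro z z' ω hzz hG hzx hz'x
      have hsum : σ z ω + ∑ k ∈ Finset.Ico z z', ε k ω = σ z' ω := by
        rw [hσ, hσ, Finset.range_eq_Ico, Finset.range_eq_Ico]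
        exact Finset.sum_Ico_consecutive (fun k => ε k ω) (Nat.zero_le z) (le_of_lt hzz)
      have hpos : 1 ≤ ∑ k ∈ Finset.Ico z z', ε k ω := by
        calc 1 ≤ ∑ _k ∈ Finset.Ico z z', 1 := by simp [Nat.card_Ico]; omega
          _ ≤ _ := Finset.sum_le_sum fun k _ => hεge ω hG k
      omega
    have hsplit : H ∩ G = ⋃ z ∈ Finset.Icc 1 x, ({ω | σ z ω = x} ∩ G) := by
      ext ω
      simp only [Set.mem_inter_iff, Set.mem_setOf_eq, Set.mem_iUnion, Finset.mem_Icc, hHdef]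
      constructor
      · rintro ⟨⟨z, hz1, hzx⟩, hG⟩
        exact ⟨z, ⟨hz1, by have := hσge z ω hG; omega⟩, hzx, hG⟩
      · rintro ⟨z, ⟨hz1, _⟩, hzx, hG⟩
        exact ⟨⟨z, hz1, hzx⟩, hG⟩
    have hdisj : (↑(Finset.Icc 1 x) : Set ℕ).Pairwise
        (Function.onFun Disjoint fun z => {ω | σ z ω = x} ∩ G) := by
      intro z _ z' _ hne
      rcases lt_or_gt_of_ne hne with h | h
      · exact Set.disjoint_left.mpr fun ω hω hω' => hmono z z' ω h hω.2 hω.1 hω'.1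
      · exact Set.disjoint_left.mpr fun ω hω hω' => hmono z' z ω h hω.2 hω'.1 hω.1
    calc P H = P (H ∩ G) := (hkey H).symm
      _ = P (⋃ z ∈ Finset.Icc 1 x, ({ω | σ z ω = x} ∩ G)) := by rw [hsplit]
      _ = ∑ z ∈ Finset.Icc 1 x, P ({ω | σ z ω = x} ∩ G) :=
          measure_biUnion_finset hdisj fun z _ => (hAmeas z x).inter hGmeas
      _ = ∑ z ∈ Finset.Icc 1 x, P {ω | σ z ω = x} := Finset.sum_congr rfl fun z _ => hkey _
  have hDT : (P {ω | ∃ z, 1 ≤ z ∧ σ z ω = x}).toReal = Tn x := by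
    rw [hH, ENNReal.toReal_sum (fun z _ => hfinm _)]
    have hicc : ∑ z ∈ Finset.Icc 1 x, (P {ω | σ z ω = x}).toReal
        = ∑ y ∈ Finset.range x, q (1+y) x := by
      rw [show Finset.Icc 1 x = Finset.Ico 1 (x+1) by rw [Finset.Ico_add_one_right_eq_Icc]]
      rw [Finset.sum_Ico_eq_sum_range]
      simp [hqdef]
    rw [hicc]
    have h : Tn x = ∑ y ∈ Finset.range x, q (y+1) x + q 0 x := Finset.sum_range_succ' _ _
    rw [h, hq0n x hx, add_zero]
    exact Finset.sum_congr rfl fun y _ => by rw [add_comm]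
  have hDq : ∀ y, (P {ω | σ y ω = x}).toReal = q y x := fun y => rfl
  -- compute the tsum
  have htsum : (∑' y : ℕ, (y : ℝ) *
      ((P {ω | σ y ω = x}).toReal / (P {ω | ∃ z, 1 ≤ z ∧ σ z ω = x}).toReal))
      = Sn x / Tn x := by
    have hzero : ∀ y ∉ Finset.range (x+1), (y : ℝ) *
        ((P {ω | σ y ω = x}).toReal / (P {ω | ∃ z, 1 ≤ z ∧ σ z ω = x}).toReal) = 0 := by
      intro y hy
      rw [Finset.mem_range, not_lt] at hy
      rw [hDq y, hqz' y x (by omega)]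
      simp
    rw [tsum_eq_sum hzero, hDT]
    simp only [hSdef]
    rw [Finset.sum_div]
    exact Finset.sum_congr rfl fun y _ => (mul_div_assoc _ _ _).symm
  obtain ⟨hTx, hSx⟩ := aux_TS u hu0 Tn Sn hT0 hT1 hS0 hS1 hTrec hSrec x
  constructor
  · rw [htsum]
    exact aux_final_bound u hu0 hu1 x hx (Sn x) (Tn x) hTx hSx
  · rw [div_le_div_iff₀ (by positivity) (by norm_num)]
    nlinarith [sq_nonneg (1-u)]
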